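/- arXiv:1506.02374 — 2 statements merged into one kernel-verified Lean document; each statement's English description precedes it below -/
import Mathlib

section
/- Let n ≥ 3 be an odd integer. (1) For θ ∈ [0,π), if Φ_n^θ has a critical zero, then θ = θ(i,j) for some 1 ≤ i, j ≤ n−1; in particular, the set of θ ∈ [0,π) for which Φ_n^θ has a critical zero is finite. (2) If θ₀ = θ(i₀,j₀) for some 1 ≤ i₀, j₀ ≤ n−1, then the critical zeros of Φ_n^{θ₀} are exactly the points (t_{n−1,i}, t_{n−1,j}) with 1 ≤ i, j ≤ n−1 satisfying cos θ₀·H_n(t_{n−1,i}) + sin θ₀·H_n(t_{n−1,j}) = 0; among them is the point (t_{n−1,i₀}, t_{n−1,j₀}), and Φ_n^{θ₀} has only finitely many critical zeros. -/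
open Polynomial Real Set

/-- Physicists' Hermite polynomials: `H 0 = 1`, `H 1 = 2X`,
`H (n+2) = 2X * H (n+1) - 2(n+1) * H n`. -/
noncomputable def hermiteH : ℕ → Polynomial ℝ
  | 0 => 1
  | 1 => Polynomial.C 2 * Polynomial.X
  | (n + 2) => Polynomial.C 2 * Polynomial.X * hermiteH (n + 1)
      - Polynomial.C ((2 * (n + 1) : ℕ) : ℝ) * hermiteH n

/-- `z : Fin m → ℝ` enumerates the zeros of `P` in increasing order. -/
def IsZeroEnum (P : Polynomial ℝ) (m : ℕ) (z : Fin m → ℝ) : Prop :=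
  StrictMono z ∧ (∀ i, P.eval (z i) = 0) ∧ (∀ x : ℝ, P.eval x = 0 → ∃ i, x = z i)

/-- The eigenfunction `Φ_n^θ`. -/
noncomputable def Phi (n : ℕ) (θ : ℝ) (p : ℝ × ℝ) : ℝ :=
  (Real.cos θ * (hermiteH n).eval p.1 + Real.sin θ * (hermiteH n).eval p.2) *
    Real.exp (-(p.1 ^ 2 + p.2 ^ 2) / 2)

/-- A critical zero of `u` : a common zero of `u` and its differential. -/
def IsCriticalZero (u : ℝ × ℝ → ℝ) (p : ℝ × ℝ) : Prop :=
  u p = 0 ∧ fderiv ℝ u p = 0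

/-- Nodal set of `u`. -/
def nodalSet (u : ℝ × ℝ → ℝ) : Set (ℝ × ℝ) := {p | u p = 0}

/-- The set of nodal domains of `u`, i.e. of connected components of the
complement of the nodal set. -/
def nodalDomains (u : ℝ × ℝ → ℝ) : Set (Set (ℝ × ℝ)) :=
  {C | ∃ p, u p ≠ 0 ∧ C = connectedComponentIn {q | u q ≠ 0} p}

lemma hermiteH_derivative : ∀ n : ℕ,
    (hermiteH (n+1)).derivative = Polynomial.C ((2*(n+1):ℕ):ℝ) * hermiteH n
  | 0 => by simp [hermiteH]
  | 1 => by
      rw [show hermiteH 2 = Polynomial.C 2 * Polynomial.X * hermiteH 1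
        - Polynomial.C ((2*1:ℕ):ℝ) * hermiteH 0 from rfl]
      simp [hermiteH, map_ofNat]
      ring
  | (n+2) => by
      have ih1 : (hermiteH (n+2)).derivative
          = Polynomial.C ((2*(n+2):ℕ):ℝ) * hermiteH (n+1) := hermiteH_derivative (n+1)
      have ih0 := hermiteH_derivative n
      rw [show hermiteH (n+3) = Polynomial.C 2 * Polynomial.X * hermiteH (n+2)
        - Polynomial.C ((2*(n+2):ℕ):ℝ) * hermiteH (n+1) from rfl]
      simp only [derivative_sub, derivative_mul, derivative_C, derivative_X, ih1, ih0,
        zero_mul, mul_one, zero_add]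
      rw [show hermiteH (n+2) = Polynomial.C 2 * Polynomial.X * hermiteH (n+1)
        - Polynomial.C ((2*(n+1):ℕ):ℝ) * hermiteH n from rfl]
      push_cast
      simp only [map_add, map_mul, map_ofNat, map_natCast, map_one]
      ring

lemma hermiteH_no_common_zero : ∀ n : ℕ, ∀ x : ℝ,
    (hermiteH (n+1)).eval x = 0 → (hermiteH n).eval x = 0 → False
  | 0, x => by simp [hermiteH]
  | (n+1), x => by
      intro h2 h1
      have key : (hermiteH (n+2)).eval x =
          2 * x * (hermiteH (n+1)).eval x - ((2*(n+1):ℕ):ℝ) * (hermiteH n).eval x := by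
        rw [show hermiteH (n+2) = Polynomial.C 2 * Polynomial.X * hermiteH (n+1)
          - Polynomial.C ((2*(n+1):ℕ):ℝ) * hermiteH n from rfl]
        simp
      rw [h2, h1, mul_zero] at key
      have h0 : ((2*(n+1):ℕ):ℝ) * (hermiteH n).eval x = 0 := by linarith
      rcases mul_eq_zero.mp h0 with h | h
      · exact (by positivity : ((2*(n+1):ℕ):ℝ) ≠ 0) h
      · exact hermiteH_no_common_zero n x h1 h

lemma phi_crit_iff (n : ℕ) (θ : ℝ) (p : ℝ × ℝ) :
    IsCriticalZero (Phi n θ) p ↔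
      (Real.cos θ * (hermiteH n).eval p.1 + Real.sin θ * (hermiteH n).eval p.2 = 0 ∧
       Real.cos θ * ((hermiteH n).derivative.eval p.1) = 0 ∧
       Real.sin θ * ((hermiteH n).derivative.eval p.2) = 0) := by
  set P := hermiteH n with hP
  set c := Real.cos θ
  set s := Real.sin θ
  set x := p.1
  set y := p.2
  have h1 : HasFDerivAt (fun q : ℝ × ℝ => P.eval q.1)
      (P.derivative.eval x • ContinuousLinearMap.fst ℝ ℝ ℝ) p :=
    (P.hasDerivAt x).comp_hasFDerivAt (f := Prod.fst) p (hasFDerivAt_fst (p := p))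
  have h2 : HasFDerivAt (fun q : ℝ × ℝ => P.eval q.2)
      (P.derivative.eval y • ContinuousLinearMap.snd ℝ ℝ ℝ) p :=
    (P.hasDerivAt y).comp_hasFDerivAt (f := Prod.snd) p (hasFDerivAt_snd (p := p))
  have hA : HasFDerivAt (fun q : ℝ × ℝ => c * P.eval q.1 + s * P.eval q.2)
      (c • (P.derivative.eval x • ContinuousLinearMap.fst ℝ ℝ ℝ)
        + s • (P.derivative.eval y • ContinuousLinearMap.snd ℝ ℝ ℝ)) p :=
    (h1.const_mul c).add (h2.const_mul s)
  have hsq1 : HasFDerivAt (fun q : ℝ × ℝ => q.1 ^ 2)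
      ((2 * x ^ 1) • ContinuousLinearMap.fst ℝ ℝ ℝ) p := by
    simpa [Function.comp_def] using (hasDerivAt_pow 2 x).comp_hasFDerivAt (f := Prod.fst) p (hasFDerivAt_fst (p := p))
  have hsq2 : HasFDerivAt (fun q : ℝ × ℝ => q.2 ^ 2)
      ((2 * y ^ 1) • ContinuousLinearMap.snd ℝ ℝ ℝ) p := by
    simpa [Function.comp_def] using (hasDerivAt_pow 2 y).comp_hasFDerivAt (f := Prod.snd) p (hasFDerivAt_snd (p := p))
  have hq : HasFDerivAt (fun q : ℝ × ℝ => -(q.1 ^ 2 + q.2 ^ 2) / 2)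
      ((2:ℝ)⁻¹ • (-((2 * x ^ 1) • ContinuousLinearMap.fst ℝ ℝ ℝ
        + (2 * y ^ 1) • ContinuousLinearMap.snd ℝ ℝ ℝ))) p :=
    ((hsq1.add hsq2).neg).mul_const (2:ℝ)⁻¹
  have hB : HasFDerivAt (fun q : ℝ × ℝ => Real.exp (-(q.1 ^ 2 + q.2 ^ 2) / 2))
      (Real.exp (-(x ^ 2 + y ^ 2) / 2) •
        ((2:ℝ)⁻¹ • (-((2 * x ^ 1) • ContinuousLinearMap.fst ℝ ℝ ℝ
          + (2 * y ^ 1) • ContinuousLinearMap.snd ℝ ℝ ℝ)))) p :=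
    (Real.hasDerivAt_exp _).comp_hasFDerivAt p hq
  have hPhi : HasFDerivAt (Phi n θ)
      ((c * P.eval x + s * P.eval y) •
          (Real.exp (-(x ^ 2 + y ^ 2) / 2) •
            ((2:ℝ)⁻¹ • (-((2 * x ^ 1) • ContinuousLinearMap.fst ℝ ℝ ℝ
              + (2 * y ^ 1) • ContinuousLinearMap.snd ℝ ℝ ℝ))))
        + Real.exp (-(x ^ 2 + y ^ 2) / 2) •
          (c • (P.derivative.eval x • ContinuousLinearMap.fst ℝ ℝ ℝ)
            + s • (P.derivative.eval y • ContinuousLinearMap.snd ℝ ℝ ℝ))) p :=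
    hA.mul hB
  have hexp : Real.exp (-(x ^ 2 + y ^ 2) / 2) ≠ 0 := Real.exp_ne_zero _
  unfold IsCriticalZero
  rw [hPhi.fderiv]
  have hPhi0 : Phi n θ p = 0 ↔ c * P.eval x + s * P.eval y = 0 := by
    rw [Phi]
    constructor
    · intro h
      rcases mul_eq_zero.mp h with h | h
      · exact h
      · exact absurd h hexp
    · intro h; rw [h, zero_mul]
  constructor
  · rintro ⟨hz, hL⟩
    have hA0 : c * P.eval x + s * P.eval y = 0 := hPhi0.mp hz
    refine ⟨hA0, ?_, ?_⟩
    · have e1 := ContinuousLinearMap.ext_iff.mp hL (1, 0)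
      simp [hA0, hexp] at e1
      simpa [mul_comm] using e1
    · have e2 := ContinuousLinearMap.ext_iff.mp hL (0, 1)
      simp [hA0, hexp] at e2
      simpa [mul_comm] using e2
  · rintro ⟨hA0, hx, hy⟩
    refine ⟨hPhi0.mpr hA0, ?_⟩
    rw [hA0, zero_smul, zero_add, smul_smul, hx, zero_smul, smul_smul, hy, zero_smul,
      zero_add, smul_zero]

lemma phi_crit_iff' (n : ℕ) (hn : 1 ≤ n) (θ : ℝ) (p : ℝ × ℝ) :
    IsCriticalZero (Phi n θ) p ↔
      (Real.cos θ * (hermiteH n).eval p.1 + Real.sin θ * (hermiteH n).eval p.2 = 0 ∧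
       Real.cos θ * (hermiteH (n-1)).eval p.1 = 0 ∧
       Real.sin θ * (hermiteH (n-1)).eval p.2 = 0) := by
  obtain ⟨m, rfl⟩ : ∃ m, n = m + 1 := ⟨n - 1, (Nat.succ_pred_eq_of_pos hn).symm⟩
  have hk : ((2*(m+1):ℕ):ℝ) ≠ 0 := by positivity
  have iffkey : ∀ a e : ℝ, a * (((2*(m+1):ℕ):ℝ) * e) = 0 ↔ a * e = 0 := by
    intro a e
    rw [mul_left_comm, mul_eq_zero]
    exact or_iff_right hk
  rw [phi_crit_iff, hermiteH_derivative m]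
  simp only [Polynomial.eval_mul, Polynomial.eval_C, Nat.add_sub_cancel, iffkey]

/-- Let `n ≥ 3` be odd, `tz` enumerate the zeros of `H_{n-1}`,
and `Θ i j ∈ (0,π)` be the critical values defined by
`cos (Θ i j) * H_n(tz i) + sin (Θ i j) * H_n(tz j) = 0`.
(1) If `Φ_n^θ` has a critical zero for some `θ ∈ [0,π)`, then `θ = Θ i j` for
some `i j`; in particular, the set of such `θ` is finite.
(2) For `θ₀ = Θ i₀ j₀`, the critical zeros of `Φ_n^{θ₀}` are exactly the points
`(tz i, tz j)` with `cos θ₀ * H_n(tz i) + sin θ₀ * H_n(tz j) = 0`; among them is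
`(tz i₀, tz j₀)`, and there are only finitely many of them. -/
theorem critical_zeros_classification
    (n : ℕ) (hn3 : 3 ≤ n) (hodd : Odd n)
    (tz : Fin (n - 1) → ℝ) (htz : IsZeroEnum (hermiteH (n - 1)) (n - 1) tz)
    (Θ : Fin (n - 1) → Fin (n - 1) → ℝ)
    (hΘ : ∀ i j, Θ i j ∈ Set.Ioo 0 π ∧
      Real.cos (Θ i j) * (hermiteH n).eval (tz i)
        + Real.sin (Θ i j) * (hermiteH n).eval (tz j) = 0) :
    (∀ θ ∈ Set.Ico (0:ℝ) π, (∃ p : ℝ × ℝ, IsCriticalZero (Phi n θ) p) →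
        ∃ i j, θ = Θ i j) ∧
    {θ ∈ Set.Ico (0:ℝ) π | ∃ p : ℝ × ℝ, IsCriticalZero (Phi n θ) p}.Finite ∧
    (∀ i₀ j₀ : Fin (n - 1),
      ({p : ℝ × ℝ | IsCriticalZero (Phi n (Θ i₀ j₀)) p} =
        {p : ℝ × ℝ | ∃ i j, p = (tz i, tz j) ∧
          Real.cos (Θ i₀ j₀) * (hermiteH n).eval (tz i)
            + Real.sin (Θ i₀ j₀) * (hermiteH n).eval (tz j) = 0}) ∧
      IsCriticalZero (Phi n (Θ i₀ j₀)) (tz i₀, tz j₀) ∧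
      {p : ℝ × ℝ | IsCriticalZero (Phi n (Θ i₀ j₀)) p}.Finite) := by
  have hn1 : 1 ≤ n := by omega
  have hm : n - 1 + 1 = n := by omega
  have hnc : ∀ x : ℝ, (hermiteH n).eval x = 0 → (hermiteH (n-1)).eval x = 0 → False := by
    intro x h1 h2
    exact hermiteH_no_common_zero (n-1) x (by rw [hm]; exact h1) h2
  have hne : ∀ i, (hermiteH n).eval (tz i) ≠ 0 := fun i h => hnc _ h (htz.2.1 i)
  have hsinΘ : ∀ i j, Real.sin (Θ i j) ≠ 0 := fun i j =>
    ne_of_gt (Real.sin_pos_of_pos_of_lt_pi (hΘ i j).1.1 (hΘ i j).1.2)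
  have hcosΘ : ∀ i j, Real.cos (Θ i j) ≠ 0 := by
    intro i j h
    have h2 := (hΘ i j).2
    rw [h, zero_mul, zero_add] at h2
    exact hne j ((mul_eq_zero.mp h2).resolve_left (hsinΘ i j))
  have huniq : ∀ θ, 0 < θ → θ < π → ∀ i j,
      Real.cos θ * (hermiteH n).eval (tz i) + Real.sin θ * (hermiteH n).eval (tz j) = 0 →
      θ = Θ i j := by
    intro θ hθ0 hθπ i j hrel
    have h2 := (hΘ i j).2
    obtain ⟨hio1, hio2⟩ := (hΘ i j).1
    have key : Real.sin (Θ i j - θ) * (hermiteH n).eval (tz i) = 0 := by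
      rw [Real.sin_sub]
      linear_combination Real.sin (Θ i j) * hrel - Real.sin θ * h2
    have hz : Real.sin (Θ i j - θ) = 0 := (mul_eq_zero.mp key).resolve_right (hne i)
    have h0 : Θ i j - θ = 0 := by
      rw [← Real.sin_eq_zero_iff_of_lt_of_lt (by linarith) (by linarith)]
      exact hz
    linarith
  have part1 : ∀ θ ∈ Set.Ico (0:ℝ) π, (∃ p : ℝ × ℝ, IsCriticalZero (Phi n θ) p) →
      ∃ i j, θ = Θ i j := by
    rintro θ ⟨hθ0, hθπ⟩ ⟨p, hp⟩
    rw [phi_crit_iff' n hn1] at hp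
    obtain ⟨hA, hx, hy⟩ := hp
    rcases eq_or_lt_of_le hθ0 with h0 | h0
    · exfalso
      rw [← h0] at hA hx
      simp only [Real.cos_zero, Real.sin_zero, one_mul, zero_mul, add_zero] at hA hx
      exact hnc _ hA hx
    · have hs : Real.sin θ ≠ 0 := ne_of_gt (Real.sin_pos_of_pos_of_lt_pi h0 hθπ)
      have hy' : (hermiteH (n-1)).eval p.2 = 0 := (mul_eq_zero.mp hy).resolve_left hs
      obtain ⟨j, hj⟩ := htz.2.2 _ hy'
      have hc : Real.cos θ ≠ 0 := by
        intro hc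
        rw [hc, zero_mul, zero_add] at hA
        have h' : (hermiteH n).eval p.2 = 0 := (mul_eq_zero.mp hA).resolve_left hs
        rw [hj] at h'
        exact hne j h'
      have hx' : (hermiteH (n-1)).eval p.1 = 0 := (mul_eq_zero.mp hx).resolve_left hc
      obtain ⟨i, hi⟩ := htz.2.2 _ hx'
      refine ⟨i, j, huniq θ h0 hθπ i j ?_⟩
      rw [← hi, ← hj]
      exact hA
  refine ⟨part1, ?_, ?_⟩
  · apply (Set.finite_range (fun ij : Fin (n-1) × Fin (n-1) => Θ ij.1 ij.2)).subset
    rintro θ ⟨hθ, hp⟩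
    obtain ⟨i, j, rfl⟩ := part1 θ hθ hp
    exact ⟨(i, j), rfl⟩
  · intro i₀ j₀
    have hs := hsinΘ i₀ j₀
    have hc := hcosΘ i₀ j₀
    have hset : {p : ℝ × ℝ | IsCriticalZero (Phi n (Θ i₀ j₀)) p} =
        {p : ℝ × ℝ | ∃ i j, p = (tz i, tz j) ∧
          Real.cos (Θ i₀ j₀) * (hermiteH n).eval (tz i)
            + Real.sin (Θ i₀ j₀) * (hermiteH n).eval (tz j) = 0} := by
      ext p
      simp only [Set.mem_setOf_eq]
      rw [phi_crit_iff' n hn1]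
      constructor
      · rintro ⟨hA, hx, hy⟩
        have hx' : (hermiteH (n-1)).eval p.1 = 0 := (mul_eq_zero.mp hx).resolve_left hc
        have hy' : (hermiteH (n-1)).eval p.2 = 0 := (mul_eq_zero.mp hy).resolve_left hs
        obtain ⟨i, hi⟩ := htz.2.2 _ hx'
        obtain ⟨j, hj⟩ := htz.2.2 _ hy'
        refine ⟨i, j, Prod.ext hi hj, ?_⟩
        rw [← hi, ← hj]
        exact hA
      · rintro ⟨i, j, rfl, hcond⟩
        exact ⟨hcond, by simp [htz.2.1 i], by simp [htz.2.1 j]⟩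
    refine ⟨hset, ?_, ?_⟩
    · rw [phi_crit_iff' n hn1]
      exact ⟨(hΘ i₀ j₀).2, by simp [htz.2.1 i₀], by simp [htz.2.1 j₀]⟩
    · rw [hset]
      apply (Set.finite_range (fun ij : Fin (n-1) × Fin (n-1) => ((tz ij.1, tz ij.2) : ℝ × ℝ))).subset
      rintro p ⟨i, j, rfl, -⟩
      exact ⟨(i, j), rfl⟩
end

section
/- Let n ≥ 2 be an integer. If 0 ≤ s < t are real numbers with H_n'(s) = 0 and H_n'(t) = 0, then |H_n(s)| < |H_n(t)|; that is, the successive relative maxima of t ↦ |H_n(t)| form an increasing sequence for t ≥ 0. -/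
open Polynomial Real Set

lemma hermiteH_deriv : ∀ n : ℕ, derivative (hermiteH (n + 1)) = C ((2 * (n + 1) : ℕ) : ℝ) * hermiteH n
  | 0 => by simp [hermiteH]
  | 1 => by
      simp only [hermiteH]
      simp only [derivative_sub, derivative_mul, derivative_C, derivative_X, derivative_one, derivative_ofNat, derivative_natCast,
        map_natCast, map_ofNat]
      push_cast
      ring
  | (n + 2) => by
      have ih1 := hermiteH_deriv n
      have ih2 : derivative (hermiteH (n + 2)) = C ((2 * (n + 2) : ℕ) : ℝ) * hermiteH (n+1) :=
        hermiteH_deriv (n + 1)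
      show derivative (hermiteH (n + 3)) = _
      rw [show hermiteH (n+3) = Polynomial.C 2 * Polynomial.X * hermiteH (n + 2)
        - Polynomial.C ((2 * (n + 2) : ℕ) : ℝ) * hermiteH (n+1) from rfl]
      rw [derivative_sub, derivative_mul, derivative_mul, ih2, derivative_mul, ih1]
      rw [show hermiteH (n+2) = Polynomial.C 2 * Polynomial.X * hermiteH (n + 1)
        - Polynomial.C ((2 * (n + 1) : ℕ) : ℝ) * hermiteH n from rfl]
      simp only [derivative_C, derivative_X, map_natCast, map_ofNat, derivative_ofNat, derivative_natCast, derivative_add, derivative_mul]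
      push_cast
      ring


lemma hermiteH_coeff_zero : ∀ n k : ℕ, n < k → (hermiteH n).coeff k = 0
  | 0, k, h => by
      rw [show hermiteH 0 = 1 from rfl, Polynomial.coeff_one, if_neg (by omega)]
  | 1, k, h => by
      rw [show hermiteH 1 = Polynomial.C 2 * Polynomial.X from rfl,
        Polynomial.coeff_C_mul, Polynomial.coeff_X, if_neg (by omega)]
      ring
  | (n + 2), k, h => by
      obtain ⟨j, rfl⟩ : ∃ j, k = j + 1 := ⟨k - 1, by omega⟩
      have h1 := hermiteH_coeff_zero (n + 1) j (by omega)
      have h0 := hermiteH_coeff_zero n (j + 1) (by omega)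
      rw [show hermiteH (n+2) = Polynomial.C 2 * Polynomial.X * hermiteH (n + 1)
        - Polynomial.C ((2 * (n + 1) : ℕ) : ℝ) * hermiteH n from rfl,
        Polynomial.coeff_sub, mul_assoc, Polynomial.coeff_C_mul, Polynomial.coeff_X_mul,
        Polynomial.coeff_C_mul, h1, h0]
      ring

lemma hermiteH_coeff_self : ∀ n : ℕ, (hermiteH n).coeff n = 2 ^ n
  | 0 => by simp [hermiteH]
  | 1 => by simp [hermiteH]
  | (n + 2) => by
      have h1 := hermiteH_coeff_self (n + 1)
      have h0 := hermiteH_coeff_zero n (n + 2) (by omega)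
      rw [show hermiteH (n+2) = Polynomial.C 2 * Polynomial.X * hermiteH (n + 1)
        - Polynomial.C ((2 * (n + 1) : ℕ) : ℝ) * hermiteH n from rfl,
        Polynomial.coeff_sub, mul_assoc, Polynomial.coeff_C_mul, Polynomial.coeff_X_mul,
        Polynomial.coeff_C_mul, h1, h0]
      ring

lemma hermiteH_ne_zero (n : ℕ) : hermiteH n ≠ 0 := fun h => by
  have h2 := hermiteH_coeff_self n
  rw [h, Polynomial.coeff_zero] at h2
  exact (pow_ne_zero n (two_ne_zero : (2:ℝ) ≠ 0)) h2.symm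

lemma hermiteH_deriv_ne_zero (n : ℕ) (hn : 1 ≤ n) : derivative (hermiteH n) ≠ 0 := by
  obtain ⟨m, rfl⟩ : ∃ m, n = m + 1 := ⟨n - 1, by omega⟩
  rw [hermiteH_deriv]
  refine mul_ne_zero ?_ (hermiteH_ne_zero m)
  simp only [ne_eq, Polynomial.C_eq_zero]
  positivity

lemma hermiteH_ode (n : ℕ) (hn : 2 ≤ n) :
    derivative (derivative (hermiteH n)) =
      C 2 * X * derivative (hermiteH n) - C ((2 * n : ℕ) : ℝ) * hermiteH n := by
  obtain ⟨m, rfl⟩ : ∃ m, n = m + 2 := ⟨n - 2, by omega⟩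
  rw [show ((m:ℕ) + 2) = (m + 1) + 1 from rfl, hermiteH_deriv (m+1),
    derivative_mul, derivative_C, hermiteH_deriv m,
    show hermiteH (m+1+1) = Polynomial.C 2 * Polynomial.X * hermiteH (m + 1)
      - Polynomial.C ((2 * (m + 1) : ℕ) : ℝ) * hermiteH m from rfl]
  simp only [map_natCast, map_ofNat]
  push_cast
  ring


lemma hermiteE_deriv (n : ℕ) (hn : 2 ≤ n) :
    derivative (C ((2*n:ℕ):ℝ) * (hermiteH n)^2 + (derivative (hermiteH n))^2) =
      C 4 * X * (derivative (hermiteH n))^2 := by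
  rw [derivative_add, derivative_C_mul, derivative_pow, derivative_pow, hermiteH_ode n hn]
  simp only [map_natCast, map_ofNat]
  push_cast
  ring


/-- For `n ≥ 2`, the successive relative maxima of
`t ↦ |H_n(t)|` form an increasing sequence for `t ≥ 0`: if `0 ≤ s < t` are
critical points of `H_n`, then `|H_n(s)| < |H_n(t)|`. -/
theorem hermite_relative_maxima_increasing
    (n : ℕ) (hn : 2 ≤ n) (s t : ℝ) (hs : 0 ≤ s) (hst : s < t)
    (h1 : (Polynomial.derivative (hermiteH n)).eval s = 0)
    (h2 : (Polynomial.derivative (hermiteH n)).eval t = 0) :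
    |(hermiteH n).eval s| < |(hermiteH n).eval t| := by
  set P := hermiteH n with hP
  set D := derivative P with hD
  set E : Polynomial ℝ := C ((2*n:ℕ):ℝ) * P^2 + D^2 with hE
  have hE' : derivative E = C 4 * X * D^2 := hermiteE_deriv n hn
  set f : ℝ → ℝ := fun x => E.eval x with hf
  have hderiv : ∀ x : ℝ, deriv f x = 4 * x * (D.eval x)^2 := by
    intro x
    rw [hf, Polynomial.deriv, hE']
    simp
  have hcont : ContinuousOn f (Set.Icc s t) := E.continuous.continuousOn
  have hmono : MonotoneOn f (Set.Icc s t) := by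
    apply monotoneOn_of_deriv_nonneg (convex_Icc s t) hcont
    · exact fun x _ => E.differentiable.differentiableAt.differentiableWithinAt
    · intro x hx
      rw [interior_Icc] at hx
      rw [hderiv]
      have : 0 ≤ x := le_trans hs hx.1.le
      positivity
  have hDne : D ≠ 0 := hermiteH_deriv_ne_zero n (by omega)
  have hinf : (Set.Ioo s t \ {x | D.IsRoot x}).Infinite :=
    (Set.Ioo_infinite hst).diff (D.finite_setOf_isRoot hDne)
  obtain ⟨c, hcIoo, hcroot⟩ := hinf.nonempty
  have hcD : D.eval c ≠ 0 := hcroot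
  have hcpos : 0 < c := lt_of_le_of_lt hs hcIoo.1
  have hopen : IsOpen {x : ℝ | 0 < 4 * x * (D.eval x)^2} := by
    apply isOpen_lt continuous_const
    exact (continuous_const.mul continuous_id).mul (D.continuous.pow 2)
  have hcmem : c ∈ {x : ℝ | 0 < 4 * x * (D.eval x)^2} := by
    have := pow_pos (abs_pos.mpr hcD) 2
    show (0:ℝ) < 4 * c * (D.eval c)^2
    positivity
  obtain ⟨ε, hε, hball⟩ := Metric.isOpen_iff.mp hopen c hcmem
  set b : ℝ := min (c + ε/2) ((c + t)/2) with hb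
  have hcb : c < b := lt_min (by linarith) (by linarith [hcIoo.2])
  have hbt : b < t := lt_of_le_of_lt (min_le_right _ _) (by linarith [hcIoo.2])
  have hstrict : StrictMonoOn f (Set.Icc c b) := by
    apply strictMonoOn_of_deriv_pos (convex_Icc c b) E.continuous.continuousOn
    intro x hx
    rw [interior_Icc] at hx
    rw [hderiv]
    have hxball : x ∈ Metric.ball c ε := by
      rw [Metric.mem_ball, Real.dist_eq, abs_lt]
      have := hx.2
      have hble : b ≤ c + ε/2 := min_le_left _ _
      constructor <;> [linarith [hx.1]; linarith]
    exact hball hxball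
  have hsb : s ≤ b := le_trans hcIoo.1.le hcb.le
  have h1' : f s ≤ f c := hmono ⟨le_refl s, hst.le⟩ ⟨hcIoo.1.le, hcIoo.2.le⟩ hcIoo.1.le
  have h2' : f c < f b := hstrict ⟨le_refl c, hcb.le⟩ ⟨hcb.le, le_refl b⟩ hcb
  have h3' : f b ≤ f t := hmono ⟨hsb, hbt.le⟩ ⟨hst.le, le_refl t⟩ hbt.le
  have hft : f s < f t := lt_of_le_of_lt h1' (lt_of_lt_of_le h2' h3')
  have hfs_eq : f s = (2*n:ℕ) * (P.eval s)^2 := by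
    simp [hf, hE, h1, ← hD]
  have hft_eq : f t = (2*n:ℕ) * (P.eval t)^2 := by
    simp [hf, hE, h2, ← hD]
  have hnpos : (0:ℝ) < (2*n:ℕ) := by
    have : 0 < 2*n := by omega
    exact_mod_cast this
  have hsq : (P.eval s)^2 < (P.eval t)^2 := by
    rw [hfs_eq, hft_eq] at hft
    exact lt_of_mul_lt_mul_left (by linarith) hnpos.le
  nlinarith [abs_nonneg (P.eval s), abs_nonneg (P.eval t), sq_abs (P.eval s), sq_abs (P.eval t)]
end
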